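/- arXiv:1612.03547 — 4 statements merged into one kernel-verified Lean document; each statement's English description precedes it below -/
import Mathlib

section
/- Let x₀ ∈ ℝⁿ, η ∈ ℝᵐ, b_i = |⟨a_i, x₀⟩| + η_i, η⁻ = min(η, 0), η⁺ = max(η, 0), Ω⁻ = {i : η_i < 0}, Ω⁺ = {i : η_i > 0}, Ω = Ω⁺ ∪ Ω⁻. If (x₀ + h, −η⁻ + g) is feasible for the constraints −b_i − e_i ≤ ⟨a_i, x⟩ ≤ b_i + e_i, e_i ≥ 0 (i = 1,…,m), then sign(⟨a_i, x₀⟩)·⟨a_i, h⟩ ≤ g_i for every i ∈ Ωᶜ ∪ Ω⁻, and g_i ≥ 0 for every i ∈ Ωᶜ ∪ Ω⁺. -/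
open BigOperators

/-- Let `bᵢ = |⟨aᵢ, x₀⟩| + ηᵢ`, `η⁻ = min(η,0)`, `Ω⁻ = {i : ηᵢ < 0}`,
`Ω⁺ = {i : ηᵢ > 0}`, `Ω = Ω⁺ ∪ Ω⁻`.  If `(x₀ + h, −η⁻ + g)` is feasible for the constraints
`−bᵢ − eᵢ ≤ ⟨aᵢ, x⟩ ≤ bᵢ + eᵢ`, `eᵢ ≥ 0`, then `sign(⟨aᵢ, x₀⟩) ⟨aᵢ, h⟩ ≤ gᵢ` for every
`i ∈ Ωᶜ ∪ Ω⁻`, and `gᵢ ≥ 0` for every `i ∈ Ωᶜ ∪ Ω⁺`. -/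
theorem stmt_3 (n m : ℕ) (a : Fin m → Fin n → ℝ) (x₀ h : Fin n → ℝ)
    (η g : Fin m → ℝ)
    (hfeas : ∀ i,
      (-( |∑ j, a i j * x₀ j| + η i) - (-(min (η i) 0) + g i) ≤ ∑ j, a i j * (x₀ j + h j) ∧
        ∑ j, a i j * (x₀ j + h j) ≤ (|∑ j, a i j * x₀ j| + η i) + (-(min (η i) 0) + g i)) ∧
      0 ≤ -(min (η i) 0) + g i) :
    (∀ i, (η i = 0 ∨ η i < 0) →
      Real.sign (∑ j, a i j * x₀ j) * (∑ j, a i j * h j) ≤ g i) ∧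
    (∀ i, (η i = 0 ∨ 0 < η i) → 0 ≤ g i) := by
  constructor
  · intro i hi
    obtain ⟨⟨h1, h2⟩, _⟩ := hfeas i
    have hsum : ∑ j, a i j * (x₀ j + h j) = (∑ j, a i j * x₀ j) + ∑ j, a i j * h j := by
      rw [← Finset.sum_add_distrib]
      exact Finset.sum_congr rfl fun j _ => by ring
    rw [hsum] at h1 h2
    have hle : η i ≤ 0 := by rcases hi with h0 | h0 <;> [exact h0.le; exact h0.le]
    rw [min_eq_left hle] at h1 h2
    rcases lt_trichotomy (∑ j, a i j * x₀ j) 0 with hs | hs | hs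
    · rw [Real.sign_of_neg hs]
      rw [abs_of_neg hs] at h1 h2
      nlinarith
    · rw [hs, Real.sign_zero]
      rw [hs, abs_zero] at h1 h2
      nlinarith
    · rw [Real.sign_of_pos hs]
      rw [abs_of_pos hs] at h1 h2
      nlinarith
  · intro i hi
    obtain ⟨_, h3⟩ := hfeas i
    have hm : min (η i) 0 = 0 := by
      rcases hi with h0 | h0
      · simp [h0]
      · exact min_eq_right h0.le
    rw [hm] at h3
    linarith
end

section
/- Let a = (a₁, a₂) be a pair of independent standard normal random variables and let θ ∈ ℝ. Then E[ 𝟙_{a₁² + a₂² ≤ 9} · |a₁·(a₁ cos θ + a₂ sin θ)| ] = ((2 − 11e^{−9/2})/(2π)) · ∫₀^{2π} |cos φ · cos(θ − φ)| dφ, and this quantity is at least (2 − 11e^{−9/2})/π. -/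
open MeasureTheory ProbabilityTheory Real Set
open scoped ENNReal NNReal

noncomputable def sgnCos (u : ℝ) : ℝ := if 0 ≤ Real.cos u then 1 else -1

lemma sgnCos_meas : Measurable sgnCos :=
  Measurable.ite (measurableSet_le measurable_const Real.continuous_cos.measurable)
    measurable_const measurable_const

lemma sgnCos_abs (u : ℝ) : |sgnCos u| = 1 := by
  unfold sgnCos; split_ifs <;> simp

lemma sgnCos_intInt (a b : ℝ) : IntervalIntegrable sgnCos volume a b := by
  rw [intervalIntegrable_iff]
  refine Integrable.mono' (integrableOn_const ?_ enorm_ne_top) sgnCos_meas.aestronglyMeasurable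
    (Filter.Eventually.of_forall fun x => (sgnCos_abs x).le)
  exact measure_Ioc_lt_top.ne

lemma sgnCos_periodic : Function.Periodic sgnCos (2 * π) := by
  intro x; unfold sgnCos; rw [Real.cos_add_two_pi]

lemma mul_sgnCos (u : ℝ) : Real.cos u * sgnCos u = |Real.cos u| := by
  unfold sgnCos; split_ifs with h
  · rw [mul_one, abs_of_nonneg h]
  · rw [mul_neg_one, abs_of_neg (not_le.1 h)]

lemma int_sgnCos : ∫ u in (0:ℝ)..(2*π), sgnCos u = 0 := by
  have hpi := Real.pi_pos
  have h1 : ∫ u in (0:ℝ)..(π/2), sgnCos u = π/2 := by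
    rw [intervalIntegral.integral_congr (g := fun _ => (1:ℝ)) ?_, intervalIntegral.integral_const]
    · simp
    · intro x hx
      rw [Set.uIcc_of_le (by linarith)] at hx
      exact if_pos (Real.cos_nonneg_of_mem_Icc ⟨by linarith [hx.1], hx.2⟩)
  have h3 : ∫ u in (3*π/2)..(2*π), sgnCos u = π/2 := by
    rw [intervalIntegral.integral_congr (g := fun _ => (1:ℝ)) ?_, intervalIntegral.integral_const]
    · simp; ring
    · intro x hx
      rw [Set.uIcc_of_le (by linarith)] at hx
      refine if_pos ?_
      rw [← Real.cos_sub_two_pi]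
      exact Real.cos_nonneg_of_mem_Icc ⟨by linarith [hx.1], by linarith [hx.2]⟩
  have h2 : ∫ u in (π/2)..(3*π/2), sgnCos u = -π := by
    have h0 : ∀ᵐ (x:ℝ), x ≠ 3*π/2 := by
      rw [MeasureTheory.ae_iff]
      simp [not_not]
    rw [intervalIntegral.integral_congr_ae (g := fun _ => (-1:ℝ)) ?_, intervalIntegral.integral_const]
    · simp; ring
    · filter_upwards [h0] with x hx hxI
      rw [Set.uIoc_of_le (by linarith)] at hxI
      refine if_neg (not_le.2 (Real.cos_neg_of_pi_div_two_lt_of_lt hxI.1 ?_))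
      rcases lt_or_eq_of_le hxI.2 with h | h
      · linarith
      · exact absurd h hx
  have a1 : ∫ u in (0:ℝ)..(2*π), sgnCos u =
      (∫ u in (0:ℝ)..(π/2), sgnCos u) + ((∫ u in (π/2)..(3*π/2), sgnCos u)
        + ∫ u in (3*π/2)..(2*π), sgnCos u) := by
    rw [intervalIntegral.integral_add_adjacent_intervals (sgnCos_intInt _ _) (sgnCos_intInt _ _),
      intervalIntegral.integral_add_adjacent_intervals (sgnCos_intInt _ _) (sgnCos_intInt _ _)]
  rw [a1, h1, h2, h3]; ring

lemma int_absCos : ∫ u in (0:ℝ)..(2*π), |Real.cos u| = 4 := by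
  have hpi := Real.pi_pos
  have hc : ∀ a b : ℝ, IntervalIntegrable (fun u => |Real.cos u|) volume a b :=
    fun a b => (Real.continuous_cos.abs).intervalIntegrable a b
  have h1 : ∫ u in (0:ℝ)..(π/2), |Real.cos u| = 1 := by
    rw [intervalIntegral.integral_congr (g := Real.cos) ?_, integral_cos]
    · simp
    · intro x hx
      rw [Set.uIcc_of_le (by linarith)] at hx
      exact abs_of_nonneg (Real.cos_nonneg_of_mem_Icc ⟨by linarith [hx.1], hx.2⟩)
  have h2 : ∫ u in (π/2)..(3*π/2), |Real.cos u| = 2 := by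
    rw [intervalIntegral.integral_congr (g := fun x => -Real.cos x) ?_]
    · rw [intervalIntegral.integral_neg, integral_cos]
      rw [show (3*π/2:ℝ) = π/2 + π by ring, Real.sin_add_pi]
      norm_num
    · intro x hx
      rw [Set.uIcc_of_le (by linarith)] at hx
      exact abs_of_nonpos (Real.cos_nonpos_of_pi_div_two_le_of_le hx.1 (by linarith [hx.2]))
  have h3 : ∫ u in (3*π/2)..(2*π), |Real.cos u| = 1 := by
    rw [intervalIntegral.integral_congr (g := Real.cos) ?_, integral_cos]
    · rw [Real.sin_two_pi, show (3*π/2:ℝ) = π/2 + π by ring, Real.sin_add_pi]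
      simp
    · intro x hx
      rw [Set.uIcc_of_le (by linarith)] at hx
      have hmem : x - 2*π ∈ Icc (-(π/2)) (π/2) := ⟨by linarith [hx.1], by linarith [hx.2]⟩
      show |Real.cos x| = Real.cos x
      rw [← Real.cos_sub_two_pi]
      exact abs_of_nonneg (Real.cos_nonneg_of_mem_Icc hmem)
  rw [intervalIntegral.integral_add_adjacent_intervals (a := (0:ℝ)) (b := π/2) (c := 2*π)
      (hc _ _) (hc _ _) |>.symm,
    intervalIntegral.integral_add_adjacent_intervals (a := (π/2:ℝ)) (b := 3*π/2) (c := 2*π)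
      (hc _ _) (hc _ _) |>.symm, h1, h2, h3]
  norm_num

lemma bddMeasIntInt {f : ℝ → ℝ} (hm : Measurable f) (C : ℝ) (hb : ∀ x, |f x| ≤ C) (a b : ℝ) :
    IntervalIntegrable f volume a b := by
  rw [intervalIntegrable_iff]
  exact Integrable.mono' (integrableOn_const measure_Ioc_lt_top.ne enorm_ne_top)
    hm.aestronglyMeasurable (Filter.Eventually.of_forall hb)

lemma absCos_periodic : Function.Periodic (fun u => |Real.cos u|) (2*π) :=
  fun x => congrArg abs (Real.cos_add_two_pi x)

lemma absCos_intInt (a b : ℝ) : IntervalIntegrable (fun u => |Real.cos u|) volume a b :=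
  (Real.continuous_cos.abs).intervalIntegrable a b

lemma int_comp_sgn (θ : ℝ) : ∫ φ in (0:ℝ)..(2*π), sgnCos (2*φ - θ) = 0 := by
  rw [intervalIntegral.integral_comp_mul_sub sgnCos two_ne_zero θ]
  have e : (2*(2*π) - θ : ℝ) = (2*0 - θ) + (2:ℤ) • (2*π) := by rw [zsmul_eq_mul]; push_cast; ring
  rw [e, sgnCos_periodic.intervalIntegral_add_zsmul_eq 2 _ sgnCos_intInt,
    sgnCos_periodic.intervalIntegral_add_eq _ 0, zero_add, int_sgnCos]
  simp

lemma int_comp_abs (θ : ℝ) : ∫ φ in (0:ℝ)..(2*π), |Real.cos (2*φ - θ)| = 4 := by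
  rw [intervalIntegral.integral_comp_mul_sub (fun u => |Real.cos u|) two_ne_zero θ]
  have e : (2*(2*π) - θ : ℝ) = (2*0 - θ) + (2:ℤ) • (2*π) := by rw [zsmul_eq_mul]; push_cast; ring
  rw [e, absCos_periodic.intervalIntegral_add_zsmul_eq 2 _ absCos_intInt,
    absCos_periodic.intervalIntegral_add_eq _ 0, zero_add, int_absCos]
  norm_num

lemma lower_bound (θ : ℝ) : 2 ≤ ∫ φ in (0:ℝ)..(2*π), |Real.cos φ * Real.cos (θ - φ)| := by
  have hpt : ∀ φ : ℝ, 1/2*Real.cos θ * sgnCos (2*φ-θ) + 1/2 * |Real.cos (2*φ-θ)|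
      ≤ |Real.cos φ * Real.cos (θ - φ)| := by
    intro φ
    have hid : Real.cos φ * Real.cos (θ - φ) = 1/2*(Real.cos θ + Real.cos (2*φ - θ)) := by
      rw [Real.cos_add_cos θ (2*φ-θ), show (θ + (2*φ-θ))/2 = φ by ring,
        show (θ - (2*φ-θ))/2 = θ - φ by ring]
      ring
    have h2 : 1/2*Real.cos θ * sgnCos (2*φ-θ) + 1/2 * |Real.cos (2*φ-θ)|
        = (Real.cos φ * Real.cos (θ - φ)) * sgnCos (2*φ-θ) := by
      rw [← mul_sgnCos (2*φ-θ), hid]; ring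
    rw [h2]
    calc (Real.cos φ * Real.cos (θ - φ)) * sgnCos (2*φ-θ)
        ≤ |(Real.cos φ * Real.cos (θ - φ)) * sgnCos (2*φ-θ)| := le_abs_self _
      _ = |Real.cos φ * Real.cos (θ - φ)| := by rw [abs_mul, sgnCos_abs, mul_one]
  have hmeas1 : Measurable (fun φ : ℝ => sgnCos (2*φ - θ)) :=
    sgnCos_meas.comp ((measurable_const.mul measurable_id).sub measurable_const)
  have ha : IntervalIntegrable (fun φ : ℝ => 1/2*Real.cos θ * sgnCos (2*φ-θ)) volume 0 (2*π) := by
    refine bddMeasIntInt (by measurability) 1 (fun x => ?_) _ _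
    have h1 := Real.abs_cos_le_one θ
    have h2 := sgnCos_abs (2*x-θ)
    rw [abs_mul, abs_mul, h2, mul_one]
    have : |(1:ℝ)/2| = 1/2 := by norm_num
    rw [this]
    nlinarith
  have hb : IntervalIntegrable (fun φ : ℝ => 1/2 * |Real.cos (2*φ-θ)|) volume 0 (2*π) := by
    apply Continuous.intervalIntegrable
    fun_prop
  have hIr : IntervalIntegrable (fun φ : ℝ => |Real.cos φ * Real.cos (θ - φ)|) volume 0 (2*π) := by
    apply Continuous.intervalIntegrable
    fun_prop
  have hmono := intervalIntegral.integral_mono_on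
    (by positivity : (0:ℝ) ≤ 2*π) (ha.add hb) hIr (fun x _ => hpt x)
  rw [intervalIntegral.integral_add ha hb, intervalIntegral.integral_const_mul,
    intervalIntegral.integral_const_mul, int_comp_sgn, int_comp_abs] at hmono
  linarith [hmono]


lemma gauss_prod_eq : (gaussianReal 0 1).prod (gaussianReal 0 1)
    = (volume : Measure (ℝ × ℝ)).withDensity
        (fun p => gaussianPDF 0 1 p.1 * gaussianPDF 0 1 p.2) := by
  have h := gaussianReal_of_var_ne_zero 0 (one_ne_zero)
  refine Measure.prod_eq fun s t hs ht => ?_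
  rw [withDensity_apply _ (hs.prod ht), Measure.volume_eq_prod, ← Measure.prod_restrict,
    lintegral_prod_mul (measurable_gaussianPDF 0 1).aemeasurable
      (measurable_gaussianPDF 0 1).aemeasurable,
    h, withDensity_apply _ hs, withDensity_apply _ ht]

lemma gauss_pdf_one (x : ℝ) :
    gaussianPDFReal 0 1 x = (Real.sqrt (2*π))⁻¹ * Real.exp (-x^2/2) := by
  simp [gaussianPDFReal]

lemma polar_pointwise (θ r φ : ℝ) (hr : 0 < r) :
    r • ((gaussianPDFReal 0 1 (r * Real.cos φ) * gaussianPDFReal 0 1 (r * Real.sin φ)) *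
        ((if (r * Real.cos φ)^2 + (r * Real.sin φ)^2 ≤ 9 then (1:ℝ) else 0) *
          |(r * Real.cos φ) * ((r * Real.cos φ) * Real.cos θ + (r * Real.sin φ) * Real.sin θ)|))
      = (((if r ≤ 3 then (1:ℝ) else 0) * (r^3 * Real.exp (-r^2/2))) * (2*π)⁻¹)
          * |Real.cos φ * Real.cos (θ - φ)| := by
  have hsq : (r*Real.cos φ)^2 + (r*Real.sin φ)^2 = r^2 := by
    rw [mul_pow, mul_pow, ← mul_add, Real.cos_sq_add_sin_sq, mul_one]
  have hif : ((r*Real.cos φ)^2 + (r*Real.sin φ)^2 ≤ 9) = (r ≤ 3) := by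
    rw [hsq]
    apply propext
    constructor
    · intro h; nlinarith
    · intro h; nlinarith
  have habs : |(r * Real.cos φ) * ((r * Real.cos φ) * Real.cos θ + (r * Real.sin φ) * Real.sin θ)|
      = r^2 * |Real.cos φ * Real.cos (θ - φ)| := by
    rw [show (r * Real.cos φ) * ((r * Real.cos φ) * Real.cos θ + (r * Real.sin φ) * Real.sin θ)
        = r^2 * (Real.cos φ * Real.cos (θ - φ)) from by rw [Real.cos_sub]; ring,
      abs_mul, abs_of_nonneg (sq_nonneg r)]
  have key : gaussianPDFReal 0 1 (r * Real.cos φ) * gaussianPDFReal 0 1 (r * Real.sin φ)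
      = (2*π)⁻¹ * Real.exp (-r^2/2) := by
    rw [gauss_pdf_one, gauss_pdf_one, mul_mul_mul_comm, ← mul_inv,
      Real.mul_self_sqrt (by positivity), ← Real.exp_add,
      show -(r*Real.cos φ)^2/2 + -(r*Real.sin φ)^2/2 = -r^2/2 from by linarith [hsq]]
  simp only [hif, key, habs, smul_eq_mul]
  split_ifs with h <;> ring

lemma radial_int : ∫ r in Set.Ioi (0:ℝ),
    ((if r ≤ 3 then (1:ℝ) else 0) * (r^3 * Real.exp (-r^2/2))) * (2*π)⁻¹
    = (2 - 11 * Real.exp (-(9:ℝ)/2)) * (2*π)⁻¹ := by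
  rw [integral_mul_const]
  congr 1
  have hAe : (fun r : ℝ => (if r ≤ 3 then (1:ℝ) else 0) * (r ^ 3 * Real.exp (-r ^ 2 / 2)))
      = Set.indicator (Set.Iic 3) (fun r => r^3 * Real.exp (-r^2/2)) := by
    funext r
    by_cases h : r ≤ 3
    · simp [Set.indicator_of_mem, Set.mem_Iic.2 h, h]
    · simp [Set.indicator_of_notMem, h, Set.mem_Iic]
  rw [hAe, setIntegral_indicator measurableSet_Iic,
    show Set.Ioi (0:ℝ) ∩ Set.Iic 3 = Set.Ioc 0 3 from Set.Ioi_inter_Iic,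
    ← intervalIntegral.integral_of_le (by norm_num : (0:ℝ) ≤ 3)]
  have hderiv : ∀ x ∈ Set.uIcc (0:ℝ) 3,
      HasDerivAt (fun r : ℝ => -(r^2+2)*Real.exp (-r^2/2)) (x^3 * Real.exp (-x^2/2)) x := by
    intro x _
    have h1 : HasDerivAt (fun r : ℝ => -r^2/2) (-x) x := by
      have h : HasDerivAt (fun r : ℝ => r^2) (2*x) x := by simpa using hasDerivAt_pow 2 x
      have := (h.neg).div_const 2
      simpa using this.congr_deriv (by ring)
    have h2 := h1.exp
    have h3 : HasDerivAt (fun r : ℝ => -(r^2+2)) (-(2*x)) x := by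
      have h : HasDerivAt (fun r : ℝ => r^2 + 2) (2*x) x := by
        simpa using (hasDerivAt_pow 2 x).add_const 2
      exact h.neg
    have h4 := h3.mul h2
    refine h4.congr_deriv ?_
    ring
  rw [intervalIntegral.integral_eq_sub_of_hasDerivAt hderiv
    (Continuous.intervalIntegrable (by fun_prop) _ _)]
  norm_num
  ring_nf

/-- For `a = (a₁, a₂)` a pair of independent standard normals and `θ ∈ ℝ`:
`E[𝟙_{a₁² + a₂² ≤ 9} · |a₁ (a₁ cos θ + a₂ sin θ)|]
  = ((2 − 11 e^{−9/2})/(2π)) ∫₀^{2π} |cos φ cos(θ − φ)| dφ`, and this quantity is at least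
`(2 − 11 e^{−9/2})/π`. -/
theorem stmt_12 (θ : ℝ) :
    (∫ a : ℝ × ℝ,
        (if a.1 ^ 2 + a.2 ^ 2 ≤ 9 then (1:ℝ) else 0) *
          |a.1 * (a.1 * Real.cos θ + a.2 * Real.sin θ)|
        ∂((gaussianReal 0 1).prod (gaussianReal 0 1))) =
      ((2 - 11 * Real.exp (-(9:ℝ) / 2)) / (2 * Real.pi)) *
        ∫ φ in (0:ℝ)..(2 * Real.pi), |Real.cos φ * Real.cos (θ - φ)| ∧
    (2 - 11 * Real.exp (-(9:ℝ) / 2)) / Real.pi ≤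
      ∫ a : ℝ × ℝ,
        (if a.1 ^ 2 + a.2 ^ 2 ≤ 9 then (1:ℝ) else 0) *
          |a.1 * (a.1 * Real.cos θ + a.2 * Real.sin θ)|
        ∂((gaussianReal 0 1).prod (gaussianReal 0 1)) := by
  have hpi := Real.pi_pos
  have hmeasD : Measurable (fun p : ℝ × ℝ =>
      (gaussianPDFReal 0 1 p.1 * gaussianPDFReal 0 1 p.2).toNNReal) :=
    (((measurable_gaussianPDFReal 0 1).comp measurable_fst).mul
      ((measurable_gaussianPDFReal 0 1).comp measurable_snd)).real_toNNReal
  have hmain : (∫ a : ℝ × ℝ,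
        (if a.1 ^ 2 + a.2 ^ 2 ≤ 9 then (1:ℝ) else 0) *
          |a.1 * (a.1 * Real.cos θ + a.2 * Real.sin θ)|
        ∂((gaussianReal 0 1).prod (gaussianReal 0 1)))
      = ((2 - 11 * Real.exp (-(9:ℝ)/2)) * (2*π)⁻¹) *
          ∫ φ in (0:ℝ)..(2*π), |Real.cos φ * Real.cos (θ - φ)| := by
    calc (∫ a : ℝ × ℝ,
        (if a.1 ^ 2 + a.2 ^ 2 ≤ 9 then (1:ℝ) else 0) *
          |a.1 * (a.1 * Real.cos θ + a.2 * Real.sin θ)|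
        ∂((gaussianReal 0 1).prod (gaussianReal 0 1)))
        = ∫ a : ℝ × ℝ, (gaussianPDFReal 0 1 a.1 * gaussianPDFReal 0 1 a.2) *
            ((if a.1 ^ 2 + a.2 ^ 2 ≤ 9 then (1:ℝ) else 0) *
              |a.1 * (a.1 * Real.cos θ + a.2 * Real.sin θ)|) := by
          have hdens : (fun p : ℝ × ℝ => gaussianPDF 0 1 p.1 * gaussianPDF 0 1 p.2)
              = (fun p : ℝ × ℝ =>
                  ((gaussianPDFReal 0 1 p.1 * gaussianPDFReal 0 1 p.2).toNNReal : ℝ≥0∞)) := by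
            funext p
            rw [gaussianPDF, gaussianPDF,
              ← ENNReal.ofReal_mul (gaussianPDFReal_nonneg 0 1 p.1)]
            rfl
          rw [gauss_prod_eq, hdens, integral_withDensity_eq_integral_smul hmeasD]
          refine integral_congr_ae (Filter.Eventually.of_forall fun a => ?_)
          dsimp only
          rw [NNReal.smul_def, Real.coe_toNNReal _
            (mul_nonneg (gaussianPDFReal_nonneg _ _ _) (gaussianPDFReal_nonneg _ _ _))]
          rw [smul_eq_mul]
      _ = ∫ p in Set.Ioi (0:ℝ) ×ˢ Set.Ioo (-π) π,
            p.1 • ((gaussianPDFReal 0 1 (p.1 * Real.cos p.2) *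
                gaussianPDFReal 0 1 (p.1 * Real.sin p.2)) *
              ((if (p.1 * Real.cos p.2)^2 + (p.1 * Real.sin p.2)^2 ≤ 9 then (1:ℝ) else 0) *
                |(p.1 * Real.cos p.2) * ((p.1 * Real.cos p.2) * Real.cos θ +
                  (p.1 * Real.sin p.2) * Real.sin θ)|)) := by
          rw [← integral_comp_polarCoord_symm (fun a : ℝ × ℝ =>
            (gaussianPDFReal 0 1 a.1 * gaussianPDFReal 0 1 a.2) *
              ((if a.1 ^ 2 + a.2 ^ 2 ≤ 9 then (1:ℝ) else 0) *
                |a.1 * (a.1 * Real.cos θ + a.2 * Real.sin θ)|))]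
          rfl
      _ = ∫ p in Set.Ioi (0:ℝ) ×ˢ Set.Ioo (-π) π,
            ((((if p.1 ≤ 3 then (1:ℝ) else 0) * (p.1^3 * Real.exp (-p.1^2/2))) * (2*π)⁻¹)
              * |Real.cos p.2 * Real.cos (θ - p.2)|) :=
          setIntegral_congr_fun (isOpen_Ioi.prod isOpen_Ioo).measurableSet
            (fun p hp => polar_pointwise θ p.1 p.2 hp.1)
      _ = (∫ r in Set.Ioi (0:ℝ),
              ((if r ≤ 3 then (1:ℝ) else 0) * (r^3 * Real.exp (-r^2/2))) * (2*π)⁻¹) *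
            ∫ φ in Set.Ioo (-π) π, |Real.cos φ * Real.cos (θ - φ)| := by
          rw [Measure.volume_eq_prod, ← Measure.prod_restrict]
          exact integral_prod_mul
            (fun r : ℝ => ((if r ≤ 3 then (1:ℝ) else 0) * (r^3 * Real.exp (-r^2/2))) * (2*π)⁻¹)
            (fun φ : ℝ => |Real.cos φ * Real.cos (θ - φ)|)
      _ = ((2 - 11 * Real.exp (-(9:ℝ)/2)) * (2*π)⁻¹) *
            ∫ φ in (0:ℝ)..(2*π), |Real.cos φ * Real.cos (θ - φ)| := by
          rw [radial_int]
          congr 1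
          rw [← MeasureTheory.integral_Ioc_eq_integral_Ioo,
            ← intervalIntegral.integral_of_le (by linarith : -π ≤ π)]
          have hper : Function.Periodic (fun φ => |Real.cos φ * Real.cos (θ - φ)|) (2*π) := by
            intro x
            simp only
            rw [Real.cos_add_two_pi, show θ - (x + 2*π) = (θ - x) - 2*π from by ring,
              Real.cos_sub_two_pi]
          have h := hper.intervalIntegral_add_eq (-π) 0
          rw [show -π + 2*π = π from by ring, zero_add] at h
          exact h
  have hC : 0 < 2 - 11 * Real.exp (-(9:ℝ)/2) := by
    have hE : Real.exp (-(9:ℝ)/2) ≤ Real.exp (-2 : ℝ) := Real.exp_le_exp.2 (by norm_num)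
    have h2 : Real.exp (-2:ℝ) * Real.exp (2:ℝ) = 1 := by rw [← Real.exp_add]; norm_num
    have h3 : (5.5:ℝ) < Real.exp 2 := by
      have h1 := Real.exp_one_gt_d9
      have he : Real.exp (2:ℝ) = Real.exp 1 * Real.exp 1 := by rw [← Real.exp_add]; norm_num
      nlinarith
    have h4 : Real.exp (-2:ℝ) < 2/11 := by nlinarith [Real.exp_pos (-2:ℝ)]
    linarith
  constructor
  · rw [hmain, show ((2 - 11 * Real.exp (-(9:ℝ)/2)) / (2*π) : ℝ)
        = (2 - 11 * Real.exp (-(9:ℝ)/2)) * (2*π)⁻¹ from div_eq_mul_inv _ _]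
  · rw [hmain]
    have hI := lower_bound θ
    have h1 : ((2 - 11 * Real.exp (-(9:ℝ)/2)) * (2*π)⁻¹) * 2
        ≤ ((2 - 11 * Real.exp (-(9:ℝ)/2)) * (2*π)⁻¹) *
            ∫ φ in (0:ℝ)..(2*π), |Real.cos φ * Real.cos (θ - φ)| :=
      mul_le_mul_of_nonneg_left hI (le_of_lt (mul_pos hC (by positivity)))
    have h2 : ((2 - 11 * Real.exp (-(9:ℝ)/2)) * (2*π)⁻¹) * 2
        = (2 - 11 * Real.exp (-(9:ℝ)/2)) / π := by
      field_simp
    linarith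
end

section
/- For every θ ∈ ℝ: ∫₀^{2π} |cos φ · cos(θ − φ)| dφ = 2·( |sin θ| + cos θ · arcsin(cos θ) ), and this quantity is at least 2. -/
open Real

private lemma stmt14_hd (θ x : ℝ) :
    HasDerivAt (fun φ => Real.cos θ * φ / 2 + Real.sin (2*φ - θ)/4)
      (Real.cos x * Real.cos (θ - x)) x := by
  have h1 : HasDerivAt (fun φ : ℝ => Real.cos θ * φ / 2) (Real.cos θ / 2) x := by
    simpa using ((hasDerivAt_id x).const_mul (Real.cos θ)).div_const 2
  have h2 : HasDerivAt (fun φ : ℝ => Real.sin (2*φ - θ)/4) (Real.cos (2*x - θ) * 2 / 4) x := by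
    have : HasDerivAt (fun φ : ℝ => 2*φ - θ) 2 x := by
      simpa using ((hasDerivAt_id x).const_mul 2).sub_const θ
    exact ((Real.hasDerivAt_sin _).comp x this).div_const 4
  refine (h1.add h2).congr_deriv ?_
  have : Real.cos (2*x - θ) = Real.cos x * Real.cos (θ - x) * 2 - Real.cos θ := by
    rw [Real.cos_sub, Real.cos_sub, Real.cos_two_mul, Real.sin_two_mul]
    ring
  rw [this]; ring

private lemma stmt14_integ (θ a b : ℝ) : (∫ φ in a..b, Real.cos φ * Real.cos (θ - φ)) =
    (Real.cos θ * b / 2 + Real.sin (2*b - θ)/4) - (Real.cos θ * a / 2 + Real.sin (2*a - θ)/4) := by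
  refine intervalIntegral.integral_eq_sub_of_hasDerivAt (fun x _ => stmt14_hd θ x) ?_
  exact (Real.continuous_cos.mul (Real.continuous_cos.comp
    (continuous_const.sub continuous_id))).intervalIntegrable a b

private lemma stmt14_cont (θ : ℝ) : Continuous fun φ => |Real.cos φ * Real.cos (θ - φ)| :=
  (Real.continuous_cos.mul (Real.continuous_cos.comp
    (continuous_const.sub continuous_id))).abs

private noncomputable def Ifun (θ : ℝ) : ℝ := ∫ φ in (0:ℝ)..(2*π), |Real.cos φ * Real.cos (θ - φ)|
private noncomputable def Rfun (θ : ℝ) : ℝ :=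
  2 * (|Real.sin θ| + Real.cos θ * Real.arcsin (Real.cos θ))

private lemma stmt14_I_eq {θ : ℝ} (h0 : 0 ≤ θ) (h1 : θ ≤ π/2) :
    Ifun θ = 2 * Real.sin θ + (π - 2*θ) * Real.cos θ := by
  have hpi := Real.pi_pos
  have hper : Function.Periodic (fun φ => |Real.cos φ * Real.cos (θ - φ)|) (2*π) := by
    intro x
    simp only []
    rw [Real.cos_add_two_pi, show θ - (x + 2*π) = (θ - x) - 2*π by ring, Real.cos_sub_two_pi]
  have hshift : Ifun θ
      = ∫ φ in (θ - π/2)..(θ - π/2 + 2*π), |Real.cos φ * Real.cos (θ - φ)| := by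
    have := hper.intervalIntegral_add_eq (θ - π/2) 0
    unfold Ifun
    simpa using this.symm
  rw [hshift]
  have hint : ∀ a b : ℝ, IntervalIntegrable (fun φ => |Real.cos φ * Real.cos (θ - φ)|)
      MeasureTheory.volume a b := fun a b => (stmt14_cont θ).intervalIntegrable a b
  have split : (∫ φ in (θ - π/2)..(θ - π/2 + 2*π), |Real.cos φ * Real.cos (θ - φ)|)
      = (∫ φ in (θ - π/2)..(π/2), |Real.cos φ * Real.cos (θ - φ)|)
      + (∫ φ in (π/2)..(θ + π/2), |Real.cos φ * Real.cos (θ - φ)|)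
      + (∫ φ in (θ + π/2)..(3*π/2), |Real.cos φ * Real.cos (θ - φ)|)
      + (∫ φ in (3*π/2)..(θ + 3*π/2), |Real.cos φ * Real.cos (θ - φ)|) := by
    rw [show θ - π/2 + 2*π = θ + 3*π/2 by ring]
    rw [intervalIntegral.integral_add_adjacent_intervals (hint _ (π/2)) (hint _ _),
      intervalIntegral.integral_add_adjacent_intervals (hint _ (θ+π/2)) (hint _ _),
      intervalIntegral.integral_add_adjacent_intervals (hint _ (3*π/2)) (hint _ _)]
  rw [split]
  have e1 : (∫ φ in (θ - π/2)..(π/2), |Real.cos φ * Real.cos (θ - φ)|)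
      = ∫ φ in (θ - π/2)..(π/2), Real.cos φ * Real.cos (θ - φ) := by
    refine intervalIntegral.integral_congr fun x hx => ?_
    rw [Set.uIcc_of_le (by linarith)] at hx
    obtain ⟨hxa, hxb⟩ := hx
    refine abs_of_nonneg (mul_nonneg ?_ ?_)
    · exact Real.cos_nonneg_of_mem_Icc ⟨by linarith, hxb⟩
    · exact Real.cos_nonneg_of_mem_Icc ⟨by linarith, by linarith⟩
  have e2 : (∫ φ in (π/2)..(θ + π/2), |Real.cos φ * Real.cos (θ - φ)|)
      = -∫ φ in (π/2)..(θ + π/2), Real.cos φ * Real.cos (θ - φ) := by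
    rw [← intervalIntegral.integral_neg]
    refine intervalIntegral.integral_congr fun x hx => ?_
    rw [Set.uIcc_of_le (by linarith)] at hx
    obtain ⟨hxa, hxb⟩ := hx
    refine abs_of_nonpos (mul_nonpos_of_nonpos_of_nonneg ?_ ?_) |>.trans (by ring)
    · exact Real.cos_nonpos_of_pi_div_two_le_of_le hxa (by linarith)
    · exact Real.cos_nonneg_of_mem_Icc ⟨by linarith, by linarith⟩
  have e3 : (∫ φ in (θ + π/2)..(3*π/2), |Real.cos φ * Real.cos (θ - φ)|)
      = ∫ φ in (θ + π/2)..(3*π/2), Real.cos φ * Real.cos (θ - φ) := by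
    refine intervalIntegral.integral_congr fun x hx => ?_
    rw [Set.uIcc_of_le (by linarith)] at hx
    obtain ⟨hxa, hxb⟩ := hx
    refine abs_of_nonneg (mul_nonneg_of_nonpos_of_nonpos ?_ ?_)
    · exact Real.cos_nonpos_of_pi_div_two_le_of_le (by linarith) (by linarith)
    · rw [← Real.cos_neg]
      exact Real.cos_nonpos_of_pi_div_two_le_of_le (by linarith) (by linarith)
  have e4 : (∫ φ in (3*π/2)..(θ + 3*π/2), |Real.cos φ * Real.cos (θ - φ)|)
      = -∫ φ in (3*π/2)..(θ + 3*π/2), Real.cos φ * Real.cos (θ - φ) := by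
    rw [← intervalIntegral.integral_neg]
    refine intervalIntegral.integral_congr fun x hx => ?_
    rw [Set.uIcc_of_le (by linarith)] at hx
    obtain ⟨hxa, hxb⟩ := hx
    refine abs_of_nonpos (mul_nonpos_of_nonneg_of_nonpos ?_ ?_) |>.trans (by ring)
    · rw [show x = (x - 2*π) + 2*π by ring, Real.cos_add_two_pi]
      exact Real.cos_nonneg_of_mem_Icc ⟨by linarith, by linarith⟩
    · rw [← Real.cos_neg]
      exact Real.cos_nonpos_of_pi_div_two_le_of_le (by linarith) (by linarith)
  rw [e1, e2, e3, e4, stmt14_integ, stmt14_integ, stmt14_integ, stmt14_integ]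
  have s1 : Real.sin (2*(π/2) - θ) = Real.sin θ := by
    rw [show 2*(π/2) - θ = π - θ by ring, Real.sin_pi_sub]
  have s2 : Real.sin (2*(θ - π/2) - θ) = -Real.sin θ := by
    rw [show 2*(θ - π/2) - θ = -(π - θ) by ring, Real.sin_neg, Real.sin_pi_sub]
  have s3 : Real.sin (2*(θ + π/2) - θ) = -Real.sin θ := by
    rw [show 2*(θ + π/2) - θ = θ + π by ring, Real.sin_add_pi]
  have s4 : Real.sin (2*(3*π/2) - θ) = Real.sin θ := by
    rw [show 2*(3*π/2) - θ = (π - θ) + 2*π by ring, Real.sin_add_two_pi, Real.sin_pi_sub]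
  have s5 : Real.sin (2*(θ + 3*π/2) - θ) = -Real.sin θ := by
    rw [show 2*(θ + 3*π/2) - θ = (θ + π) + 2*π by ring, Real.sin_add_two_pi, Real.sin_add_pi]
  rw [s1, s2, s3, s4, s5]
  ring

private lemma stmt14_I_per (θ : ℝ) : Ifun (θ + π) = Ifun θ := by
  unfold Ifun
  refine intervalIntegral.integral_congr fun x _ => ?_
  rw [show θ + π - x = (θ - x) + π by ring, Real.cos_add_pi, mul_neg, abs_neg]

private lemma stmt14_I_neg (θ : ℝ) : Ifun (-θ) = Ifun θ := by
  unfold Ifun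
  have := intervalIntegral.integral_comp_sub_left
    (a := (0:ℝ)) (b := 2*π) (fun x => |Real.cos x * Real.cos (θ - x)|) (2*π)
  rw [sub_self, sub_zero] at this
  rw [← this]
  refine intervalIntegral.integral_congr fun x _ => ?_
  rw [show (2*π - x) = -x + 2*π by ring, Real.cos_add_two_pi,
    show θ - (-x + 2*π) = (θ + x) - 2*π by ring, Real.cos_sub_two_pi,
    Real.cos_neg, show -θ - x = -(θ + x) by ring, Real.cos_neg]

private lemma stmt14_R_per (θ : ℝ) : Rfun (θ + π) = Rfun θ := by
  unfold Rfun
  rw [Real.sin_add_pi, Real.cos_add_pi, abs_neg, Real.arcsin_neg]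
  ring

private lemma stmt14_R_neg (θ : ℝ) : Rfun (-θ) = Rfun θ := by
  unfold Rfun
  rw [Real.sin_neg, Real.cos_neg, abs_neg]

private lemma stmt14_R_eq {θ : ℝ} (h0 : 0 ≤ θ) (h1 : θ ≤ π/2) :
    Rfun θ = 2 * Real.sin θ + (π - 2*θ) * Real.cos θ := by
  have hpi := Real.pi_pos
  unfold Rfun
  rw [Real.arcsin_eq_pi_div_two_sub_arccos, Real.arccos_cos h0 (by linarith),
    abs_of_nonneg (Real.sin_nonneg_of_nonneg_of_le_pi h0 (by linarith))]
  ring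

private lemma stmt14_key (θ : ℝ) : Ifun θ = Rfun θ := by
  have hpi := Real.pi_pos
  set G : ℝ → ℝ := fun t => Ifun t - Rfun t with hG
  suffices h : G θ = 0 by
    have : Ifun θ - Rfun θ = 0 := h
    linarith
  have hGper : Function.Periodic G π := fun t => by
    simp only [hG, stmt14_I_per, stmt14_R_per]
  have hGneg : ∀ t, G (-t) = G t := fun t => by
    simp only [hG, stmt14_I_neg, stmt14_R_neg]
  have hG0 : ∀ t : ℝ, 0 ≤ t → t ≤ π/2 → G t = 0 := fun t h0 h1 => by
    simp only [hG, stmt14_I_eq h0 h1, stmt14_R_eq h0 h1, sub_self]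
  obtain ⟨y, hy, hxy⟩ := hGper.exists_mem_Ico₀ hpi θ
  rw [hxy]
  rcases le_or_gt y (π/2) with h | h
  · exact hG0 y hy.1 h
  · have h1 : G y = G (π - y) := by
      have := hGper (y - π)
      rw [show y - π + π = y by ring] at this
      rw [this, ← hGneg (y - π), show -(y-π) = π - y by ring]
    rw [h1]
    exact hG0 _ (by linarith [hy.2]) (by linarith)

private lemma stmt14_arcsin_ge {x : ℝ} (h0 : 0 ≤ x) (h1 : x ≤ 1) : x ≤ Real.arcsin x := by
  have hs : Real.sin (Real.arcsin x) = x := Real.sin_arcsin (by linarith) h1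
  have hy : 0 ≤ Real.arcsin x := Real.arcsin_nonneg.2 h0
  rcases hy.eq_or_lt with h | h
  · rw [← h] at hs; simp at hs; simp [hs, ← h]
  · have := Real.sin_lt h
    rw [hs] at this
    linarith

private lemma stmt14_lb (θ : ℝ) : 2 ≤ Rfun θ := by
  unfold Rfun
  have hsin : Real.sin θ ^ 2 ≤ |Real.sin θ| := by
    rw [← sq_abs]
    nlinarith [abs_nonneg (Real.sin θ), Real.abs_sin_le_one θ]
  have hcos : Real.cos θ ^ 2 ≤ Real.cos θ * Real.arcsin (Real.cos θ) := by
    rcases le_or_gt 0 (Real.cos θ) with h | h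
    · have := stmt14_arcsin_ge h (Real.cos_le_one θ)
      nlinarith
    · have h1 : (0:ℝ) ≤ -Real.cos θ := by linarith
      have h2 : -Real.cos θ ≤ 1 := by nlinarith [Real.neg_one_le_cos θ]
      have := stmt14_arcsin_ge h1 h2
      have e : Real.cos θ * Real.arcsin (Real.cos θ)
          = (-Real.cos θ) * Real.arcsin (-Real.cos θ) := by
        rw [Real.arcsin_neg]; ring
      rw [e]; nlinarith
  nlinarith [Real.sin_sq_add_cos_sq θ]

/-- For every `θ ∈ ℝ`:
`∫₀^{2π} |cos φ · cos(θ − φ)| dφ = 2 (|sin θ| + cos θ · arcsin (cos θ))`, and this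
quantity is at least `2`. -/
theorem stmt_14 (θ : ℝ) :
    (∫ φ in (0:ℝ)..(2 * Real.pi), |Real.cos φ * Real.cos (θ - φ)| =
      2 * (|Real.sin θ| + Real.cos θ * Real.arcsin (Real.cos θ))) ∧
    2 ≤ ∫ φ in (0:ℝ)..(2 * Real.pi), |Real.cos φ * Real.cos (θ - φ)| := by
  have h := stmt14_key θ
  have h2 := stmt14_lb θ
  unfold Ifun Rfun at h h2
  exact ⟨h, h ▸ h2⟩
end

section
/- Let x₀ ∈ ℝⁿ, let a₁,…,a_m ∈ ℝⁿ be vectors, let Ω ⊆ {1,…,m} with Ωᶜ = {1,…,m}\Ω nonempty, and write 𝟙_i = 𝟙_{|⟨a_i,x₀⟩| ≤ 3‖x₀‖₂}. Suppose (deterministically) that ‖(1/|Ωᶜ|) Σ_{i∈Ωᶜ} 𝟙_i · a_i a_iᵀ − I_{n×n}‖ ≤ 0.04. Let S = {i : ⟨a_i, x₀⟩·⟨a_i, h⟩ > 0}, and suppose g ∈ ℝᵐ and h ∈ ℝⁿ satisfy: g_i ≥ 0 for all i ∈ Ωᶜ, |⟨a_i, h⟩| ≤ g_i for all i ∈ Ωᶜ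 ∩ S, and λ ≥ (6/|Ωᶜ|)‖x₀‖₂. Then ⟨x₀, h⟩ − λ Σ_{i∈Ωᶜ} g_i ≤ −(1/|Ωᶜ|) Σ_{i∈Ωᶜ} 𝟙_i·|⟨a_i, x₀⟩|·|⟨a_i, h⟩| + 0.04·‖x₀‖₂·‖h‖₂. -/
open BigOperators

/-- The Euclidean norm on `ℝⁿ`. -/
noncomputable def norm2 {n : ℕ} (x : Fin n → ℝ) : ℝ := Real.sqrt (∑ j, x j ^ 2)

/-- The spectral (ℓ²-operator) norm of an `n × n` real matrix. -/
noncomputable def specNorm {n : ℕ} (M : Matrix (Fin n) (Fin n) ℝ) : ℝ :=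
  ‖Matrix.toEuclideanCLM (𝕜 := ℝ) M‖

lemma spec_bound {n : ℕ} (M : Matrix (Fin n) (Fin n) ℝ) (x y : Fin n → ℝ) :
    |∑ j, x j * (M.mulVec y) j| ≤ specNorm M * norm2 x * norm2 y := by
  set x' : EuclideanSpace ℝ (Fin n) := (WithLp.equiv 2 _).symm x
  set y' : EuclideanSpace ℝ (Fin n) := (WithLp.equiv 2 _).symm y
  have hx : ‖x'‖ = norm2 x := by
    rw [EuclideanSpace.norm_eq, norm2]
    congr 1; apply Finset.sum_congr rfl; intros; rw [Real.norm_eq_abs, sq_abs]; rfl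
  have hy : ‖y'‖ = norm2 y := by
    rw [EuclideanSpace.norm_eq, norm2]
    congr 1; apply Finset.sum_congr rfl; intros; rw [Real.norm_eq_abs, sq_abs]; rfl
  have hinner : (inner ℝ x' (Matrix.toEuclideanCLM (𝕜 := ℝ) M y') : ℝ)
      = ∑ j, x j * (M.mulVec y) j := by
    rw [Matrix.inner_toEuclideanCLM]
    simp [dotProduct, x', y']
  calc |∑ j, x j * (M.mulVec y) j|
      = |(inner ℝ x' (Matrix.toEuclideanCLM (𝕜 := ℝ) M y') : ℝ)| := by rw [hinner]
    _ ≤ ‖x'‖ * ‖Matrix.toEuclideanCLM (𝕜 := ℝ) M y'‖ := abs_real_inner_le_norm _ _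
    _ ≤ ‖x'‖ * (specNorm M * ‖y'‖) := by
        gcongr; exact (Matrix.toEuclideanCLM (𝕜 := ℝ) M).le_opNorm y'
    _ = specNorm M * norm2 x * norm2 y := by rw [hx, hy]; ring


lemma dot_sum {n m : ℕ} (x y : Fin n → ℝ) (s : Fin m → ℝ) (a : Fin m → Fin n → ℝ)
    (T : Finset (Fin m)) (c : ℝ) :
    ∑ j, x j * ((c • ∑ i ∈ T, s i • Matrix.vecMulVec (a i) (a i)).mulVec y) j
      = c * ∑ i ∈ T, s i * ((∑ j, a i j * x j) * (∑ j, a i j * y j)) := by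
  have swap : ∀ (f : Fin n → Fin n → Fin m → ℝ),
      ∑ j, ∑ k, ∑ i ∈ T, f j k i = ∑ i ∈ T, ∑ j, ∑ k, f j k i := fun f =>
    calc ∑ j, ∑ k, ∑ i ∈ T, f j k i
        = ∑ j, ∑ i ∈ T, ∑ k, f j k i :=
          Finset.sum_congr rfl fun j _ => Finset.sum_comm
      _ = ∑ i ∈ T, ∑ j, ∑ k, f j k i := Finset.sum_comm
  simp only [Matrix.mulVec, dotProduct, Matrix.smul_apply, Matrix.sum_apply,
    Matrix.vecMulVec_apply, smul_eq_mul, Finset.sum_mul, Finset.mul_sum]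
  rw [swap fun j k i => x j * (c * (s i * (a i j * a i k)) * y k)]
  refine Finset.sum_congr rfl fun i _ => ?_
  rw [Finset.sum_comm]
  exact Finset.sum_congr rfl fun j _ => Finset.sum_congr rfl fun k _ => by ring


lemma stmt19_aux {m : ℕ} (c N Hh lam D X : ℝ) (T : Finset (Fin m)) (p q g s : Fin m → ℝ)
    (hc : 0 < c) (hN : 0 ≤ N)
    (hs0 : ∀ i, s i = 0 ∨ s i = 1) (hsle : ∀ i, s i = 1 → |p i| ≤ 3 * N)
    (hg : ∀ i ∈ T, 0 ≤ g i) (hgS : ∀ i ∈ T, p i * q i > 0 → |q i| ≤ g i)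
    (hlam : lam ≥ 6 / c * N)
    (hD : |D| ≤ 0.04 * N * Hh)
    (hsub : D = (1 / c) * (∑ i ∈ T, s i * (p i * q i)) - X) :
    X - lam * ∑ i ∈ T, g i ≤ -(1 / c) * (∑ i ∈ T, s i * (|p i| * |q i|)) + 0.04 * N * Hh := by
  have hterm : ∀ i ∈ T, s i * (p i * q i) ≤ -(s i * (|p i| * |q i|)) + 6 * N * g i := by
    intro i hi
    have hgi := hg i hi
    by_cases hpq : p i * q i > 0
    · have hqg := hgS i hi hpq
      have habs : p i * q i = |p i| * |q i| := by
        rw [← abs_mul]; exact (abs_of_pos hpq).symm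
      rcases hs0 i with h0 | h1
      · rw [h0]; nlinarith
      · have hple := hsle i h1
        rw [h1, habs]
        nlinarith [abs_nonneg (p i), abs_nonneg (q i),
          mul_le_mul hple hqg (abs_nonneg _) (by nlinarith)]
    · have hle : p i * q i ≤ 0 := le_of_not_gt hpq
      have habs : p i * q i = -(|p i| * |q i|) := by
        rw [← abs_mul, abs_of_nonpos hle]; ring
      have hs01 : 0 ≤ s i := by rcases hs0 i with h0 | h0 <;> simp [h0]
      rw [habs]; nlinarith
  have hsum : ∑ i ∈ T, s i * (p i * q i)
      ≤ -(∑ i ∈ T, s i * (|p i| * |q i|)) + 6 * N * ∑ i ∈ T, g i := by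
    calc ∑ i ∈ T, s i * (p i * q i)
        ≤ ∑ i ∈ T, (-(s i * (|p i| * |q i|)) + 6 * N * g i) := Finset.sum_le_sum hterm
      _ = -(∑ i ∈ T, s i * (|p i| * |q i|)) + 6 * N * ∑ i ∈ T, g i := by
          rw [Finset.sum_add_distrib, Finset.sum_neg_distrib, Finset.mul_sum]
  have hg0 : 0 ≤ ∑ i ∈ T, g i := Finset.sum_nonneg hg
  have hic : 0 < 1 / c := by positivity
  have hF4 : (1 / c) * (∑ i ∈ T, s i * (p i * q i))
      ≤ (1 / c) * (-(∑ i ∈ T, s i * (|p i| * |q i|)) + 6 * N * ∑ i ∈ T, g i) :=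
    mul_le_mul_of_nonneg_left hsum hic.le
  have hF5 : (6 / c * N) * ∑ i ∈ T, g i ≤ lam * ∑ i ∈ T, g i :=
    mul_le_mul_of_nonneg_right hlam hg0
  have hexp : (1 / c) * (-(∑ i ∈ T, s i * (|p i| * |q i|)) + 6 * N * ∑ i ∈ T, g i)
      = -(1 / c) * (∑ i ∈ T, s i * (|p i| * |q i|)) + (6 / c * N) * ∑ i ∈ T, g i := by
    ring
  have hDabs : -D ≤ |D| := neg_le_abs D
  linarith

/-- Deterministic bound on term `I` in the proof of the main theorem.  With
`𝟙ᵢ = 𝟙_{|⟨aᵢ,x₀⟩| ≤ 3‖x₀‖₂}`, if `‖(1/|Ωᶜ|) ∑_{i∈Ωᶜ} 𝟙ᵢ aᵢ aᵢᵀ − I‖ ≤ 0.04`,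
`S = {i : ⟨aᵢ,x₀⟩⟨aᵢ,h⟩ > 0}`, `gᵢ ≥ 0` on `Ωᶜ`, `|⟨aᵢ,h⟩| ≤ gᵢ` on `Ωᶜ ∩ S`, and
`λ ≥ (6/|Ωᶜ|)‖x₀‖₂`, then
`⟨x₀,h⟩ − λ ∑_{i∈Ωᶜ} gᵢ ≤ −(1/|Ωᶜ|) ∑_{i∈Ωᶜ} 𝟙ᵢ |⟨aᵢ,x₀⟩||⟨aᵢ,h⟩| + 0.04‖x₀‖₂‖h‖₂`. -/
theorem stmt_19 (n m : ℕ) (x₀ h : Fin n → ℝ) (a : Fin m → Fin n → ℝ)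
    (Ω : Finset (Fin m)) (hΩc : Ωᶜ.Nonempty) (g : Fin m → ℝ) (lam : ℝ)
    (hnorm : specNorm
        ((1 / (Ωᶜ.card : ℝ)) •
            (∑ i ∈ Ωᶜ,
              (if |∑ j, a i j * x₀ j| ≤ 3 * norm2 x₀ then (1:ℝ) else 0) •
                Matrix.vecMulVec (a i) (a i)) - 1) ≤ 0.04)
    (hg : ∀ i ∈ Ωᶜ, 0 ≤ g i)
    (hgS : ∀ i ∈ Ωᶜ, (∑ j, a i j * x₀ j) * (∑ j, a i j * h j) > 0 →
      |∑ j, a i j * h j| ≤ g i)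
    (hlam : lam ≥ (6 / (Ωᶜ.card : ℝ)) * norm2 x₀) :
    (∑ j, x₀ j * h j) - lam * ∑ i ∈ Ωᶜ, g i ≤
      -(1 / (Ωᶜ.card : ℝ)) *
          (∑ i ∈ Ωᶜ,
            (if |∑ j, a i j * x₀ j| ≤ 3 * norm2 x₀ then (1:ℝ) else 0) *
              (|∑ j, a i j * x₀ j| * |∑ j, a i j * h j|)) +
        0.04 * norm2 x₀ * norm2 h := by
  classical
  set c : ℝ := (Ωᶜ.card : ℝ) with hc
  have hcpos : 0 < c := by rw [hc]; exact_mod_cast Finset.card_pos.mpr hΩc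
  set A : Matrix (Fin n) (Fin n) ℝ :=
    (1 / c) •
        (∑ i ∈ Ωᶜ,
          (if |∑ j, a i j * x₀ j| ≤ 3 * norm2 x₀ then (1:ℝ) else 0) •
            Matrix.vecMulVec (a i) (a i)) - 1 with hA
  set D : ℝ := ∑ j, x₀ j * (A.mulVec h) j with hD
  have hDle : |D| ≤ 0.04 * norm2 x₀ * norm2 h := by
    calc |D| ≤ specNorm A * norm2 x₀ * norm2 h := spec_bound A x₀ h
      _ ≤ 0.04 * norm2 x₀ * norm2 h :=
          mul_le_mul_of_nonneg_right
            (mul_le_mul_of_nonneg_right hnorm (Real.sqrt_nonneg _)) (Real.sqrt_nonneg _)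
  have hdot : ∑ j, x₀ j *
        (((1 / c) •
          (∑ i ∈ Ωᶜ,
            (if |∑ j, a i j * x₀ j| ≤ 3 * norm2 x₀ then (1:ℝ) else 0) •
              Matrix.vecMulVec (a i) (a i))).mulVec h) j
      = (1 / c) * ∑ i ∈ Ωᶜ,
          (if |∑ j, a i j * x₀ j| ≤ 3 * norm2 x₀ then (1:ℝ) else 0) *
            ((∑ j, a i j * x₀ j) * (∑ j, a i j * h j)) :=
    dot_sum x₀ h (fun i => if |∑ j, a i j * x₀ j| ≤ 3 * norm2 x₀ then (1:ℝ) else 0) a Ωᶜ (1 / c)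
  have hsub : D = (1 / c) * (∑ i ∈ Ωᶜ,
        (if |∑ j, a i j * x₀ j| ≤ 3 * norm2 x₀ then (1:ℝ) else 0) *
          ((∑ j, a i j * x₀ j) * (∑ j, a i j * h j))) - ∑ j, x₀ j * h j := by
    rw [hD, ← hdot, hA, Matrix.sub_mulVec, Matrix.one_mulVec]
    simp only [Pi.sub_apply, mul_sub, Finset.sum_sub_distrib]
  exact stmt19_aux c (norm2 x₀) (norm2 h) lam D (∑ j, x₀ j * h j) Ωᶜ
    (fun i => ∑ j, a i j * x₀ j) (fun i => ∑ j, a i j * h j) g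
    (fun i => if |∑ j, a i j * x₀ j| ≤ 3 * norm2 x₀ then (1:ℝ) else 0)
    hcpos (Real.sqrt_nonneg _)
    (fun i => by split <;> simp)
    (fun i hi => by
      by_cases hb : |∑ j, a i j * x₀ j| ≤ 3 * norm2 x₀
      · exact hb
      · simp [hb] at hi)
    hg hgS hlam hDle hsub
end
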